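/- Suppose for every i, wᵢKᵢ ≥ K₀ with w > 0, K ≥ 0, K₀ ≥ 0, p ≥ 0. Then for each ε ∈ (0,1), the two-point distribution π_ε placing mass ε at the point x = ε⁻¹p + K and mass 1−ε at 0 satisfies E_{π_ε}[(xᵢ−Kᵢ)₊] = pᵢ for all i, and E_{π_ε}[(wᵀx−K₀)₊] → wᵀp as ε → 0. -/

import Mathlib

open MeasureTheory Filter

lemma my_integrable_dirac {α : Type*} [MeasurableSpace α] [MeasurableSingletonClass α]
    (f : α → ℝ) (a : α) : Integrable f (Measure.dirac a) := by
  refine (integrable_const (f a)).congr ?_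
  rw [MeasureTheory.ae_dirac_eq]
  exact Filter.eventually_pure.2 rfl

lemma integral_two_dirac {α : Type*} [MeasurableSpace α] [MeasurableSingletonClass α]
    (f : α → ℝ) (a b : α) (c d : ℝ) :
    ∫ x, f x ∂(ENNReal.ofReal c • Measure.dirac a + ENNReal.ofReal d • Measure.dirac b)
      = (ENNReal.ofReal c).toReal * f a + (ENNReal.ofReal d).toReal * f b := by
  rw [integral_add_measure ((my_integrable_dirac f a).smul_measure ENNReal.ofReal_ne_top)
      ((my_integrable_dirac f b).smul_measure ENNReal.ofReal_ne_top),
    integral_smul_measure, integral_smul_measure, integral_dirac, integral_dirac]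
  simp [smul_eq_mul]

theorem lower_bound_asymptotically_attained {n : ℕ} (w p K : Fin n → ℝ) (K0 : ℝ)
    (hw : ∀ i, 0 < w i) (hp : ∀ i, 0 ≤ p i) (hK : ∀ i, 0 ≤ K i) (hK0 : 0 ≤ K0)
    (hwK : ∀ i, K0 ≤ w i * K i) :
    let πf : ℝ → Measure (Fin n → ℝ) := fun ε =>
      ENNReal.ofReal ε • Measure.dirac (fun i => p i / ε + K i) +
        ENNReal.ofReal (1 - ε) • Measure.dirac 0
    (∀ ε ∈ Set.Ioo (0:ℝ) 1, IsProbabilityMeasure (πf ε) ∧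
      ∀ i, ∫ x, max (x i - K i) 0 ∂(πf ε) = p i) ∧
    Tendsto (fun ε => ∫ x, max (∑ i, w i * x i - K0) 0 ∂(πf ε))
      (nhdsWithin 0 (Set.Ioo 0 1)) (nhds (∑ i, w i * p i)) := by
  intro πf
  set S := ∑ i, w i * p i with hS
  set C := ∑ i, w i * K i with hC
  have hS0 : 0 ≤ S := Finset.sum_nonneg fun i _ => mul_nonneg (hw i).le (hp i)
  constructor
  · rintro ε ⟨hε0, hε1⟩
    constructor
    · constructor
      simp only [πf, Measure.add_apply, Measure.smul_apply, Measure.dirac_apply_of_mem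
        (Set.mem_univ _), smul_eq_mul, mul_one]
      rw [← ENNReal.ofReal_add hε0.le (by linarith)]
      norm_num
    · intro i
      rw [show πf ε = ENNReal.ofReal ε • Measure.dirac (fun i => p i / ε + K i) +
        ENNReal.ofReal (1 - ε) • Measure.dirac 0 from rfl, integral_two_dirac]
      have h1 : max ((fun i => p i / ε + K i) i - K i) 0 = p i / ε := by
        simp only [add_sub_cancel_right]
        exact max_eq_left (div_nonneg (hp i) hε0.le)
      have h2 : max ((0 : Fin n → ℝ) i - K i) 0 = 0 := by
        simp only [Pi.zero_apply, zero_sub]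
        exact max_eq_right (by linarith [hK i])
      rw [h1, h2, ENNReal.toReal_ofReal hε0.le, mul_zero, add_zero,
        mul_div_cancel₀ _ (ne_of_gt hε0)]
  · have key : ∀ ε ∈ Set.Ioo (0:ℝ) 1,
        (∫ x, max (∑ i, w i * x i - K0) 0 ∂(πf ε)) = max (S + ε * (C - K0)) 0 := by
      rintro ε ⟨hε0, hε1⟩
      rw [show πf ε = ENNReal.ofReal ε • Measure.dirac (fun i => p i / ε + K i) +
        ENNReal.ofReal (1 - ε) • Measure.dirac 0 from rfl, integral_two_dirac]
      have h2 : max (∑ i, w i * (0 : Fin n → ℝ) i - K0) 0 = 0 := by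
        simp only [Pi.zero_apply, mul_zero, Finset.sum_const_zero, zero_sub]
        exact max_eq_right (by linarith)
      have h1 : ∑ i, w i * (p i / ε + K i) = S / ε + C := by
        have e : ∀ i ∈ Finset.univ, w i * (p i / ε + K i) = w i * p i / ε + w i * K i := by
          intro i _; field_simp
        rw [Finset.sum_congr rfl e, Finset.sum_add_distrib, hS, hC, Finset.sum_div]
      rw [h1, h2, ENNReal.toReal_ofReal hε0.le, mul_zero, add_zero,
        mul_max_of_nonneg _ _ hε0.le, mul_zero]
      congr 1
      field_simp
      ring
    have cont : Tendsto (fun ε => max (S + ε * (C - K0)) 0) (nhdsWithin 0 (Set.Ioo 0 1))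
        (nhds S) := by
      have : Tendsto (fun ε : ℝ => max (S + ε * (C - K0)) 0) (nhds 0) (nhds (max (S + 0 * (C - K0)) 0)) := by
        exact (Continuous.max (by continuity) continuous_const).tendsto 0
      simpa [max_eq_left hS0] using this.mono_left nhdsWithin_le_nhds
    exact cont.congr' (by filter_upwards [self_mem_nhdsWithin] with ε hε using (key ε hε).symm)
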